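/- Suppose random variables satisfy: Z ⫫ (Y₁, Y₀, V), V ~ U[0,1], Y = Y₁·1{V ≤ P(Z)} + Y₀·1{V > P(Z)}, and Y₁, Y₀ are integrable. Then for every z in the support of Z, E[Y | Z = z] = ∫₀^{P(z)} E[Y₁ | V = v] dv + ∫_{P(z)}^{1} E[Y₀ | V = v] dv. -/

import Mathlib

open MeasureTheory ProbabilityTheory

/-- In the selection model `Y = Y₁·1{V ≤ P(Z)} + Y₀·1{V > P(Z)}` with `Z ⫫ (Y₁,Y₀,V)` and
`V ~ U[0,1]`, the conditional mean of `Y` given `Z` decomposes as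
`E[Y|Z=z] = ∫₀^{P(z)} E[Y₁|V=v] dv + ∫_{P(z)}^1 E[Y₀|V=v] dv`. -/
theorem conditional_mean_decomposition
    {Ω 𝒵 : Type*} [MeasureSpace Ω] [IsProbabilityMeasure (volume : Measure Ω)]
    [MeasurableSpace 𝒵]
    (Y Y1 Y0 V : Ω → ℝ) (Z : Ω → 𝒵) (P : 𝒵 → ℝ)
    (hPmeas : Measurable P) (hZmeas : Measurable Z) (hVmeas : Measurable V)
    (hY1meas : Measurable Y1) (hY0meas : Measurable Y0)
    (hPrange : ∀ z, P z ∈ Set.Icc (0:ℝ) 1)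
    (hunif : (volume : Measure Ω).map V = (volume : Measure ℝ).restrict (Set.Icc 0 1))
    (hindep : IndepFun Z (fun ω => (Y1 ω, Y0 ω, V ω)) (volume : Measure Ω))
    (hY1int : Integrable Y1 (volume : Measure Ω))
    (hY0int : Integrable Y0 (volume : Measure Ω))
    (hYdef : ∀ ω, Y ω = Y1 ω * (if V ω ≤ P (Z ω) then 1 else 0)
        + Y0 ω * (if V ω ≤ P (Z ω) then 0 else 1))
    (m1 m0 : ℝ → ℝ)
    (hm1 : ∀ s : Set ℝ, MeasurableSet s →
      ∫ ω in V ⁻¹' s, Y1 ω = ∫ v in s ∩ Set.Icc (0:ℝ) 1, m1 v)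
    (hm0 : ∀ s : Set ℝ, MeasurableSet s →
      ∫ ω in V ⁻¹' s, Y0 ω = ∫ v in s ∩ Set.Icc (0:ℝ) 1, m0 v) :
    (volume : Measure Ω)[Y | MeasurableSpace.comap Z inferInstance]
      =ᵐ[(volume : Measure Ω)]
      fun ω => (∫ v in Set.Ioc 0 (P (Z ω)), m1 v) + ∫ v in Set.Ioc (P (Z ω)) 1, m0 v := by
  classical
  have hPZ : Measurable fun ω => P (Z ω) := hPmeas.comp hZmeas
  -- the functions g1 t = ∫_{V ≤ t} Y1, g0 t = ∫_{V > t} Y0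
  set g1 : ℝ → ℝ := fun t => ∫ ω in V ⁻¹' Set.Iic t, Y1 ω with hg1def
  set g0 : ℝ → ℝ := fun t => ∫ ω in V ⁻¹' Set.Ioi t, Y0 ω with hg0def
  -- measurability of g1, g0 via monotone parts
  have mono_aux : ∀ f : Ω → ℝ, Integrable f (volume : Measure Ω) → (∀ ω, 0 ≤ f ω) →
      Monotone fun t => ∫ ω in V ⁻¹' Set.Iic t, f ω := by
    intro f hfint hf s t hst
    exact setIntegral_mono_set hfint.integrableOn (ae_of_all _ hf)
      (HasSubset.Subset.eventuallyLE (Set.preimage_mono (Set.Iic_subset_Iic.mpr hst)))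
  have anti_aux : ∀ f : Ω → ℝ, Integrable f (volume : Measure Ω) → (∀ ω, 0 ≤ f ω) →
      Antitone fun t => ∫ ω in V ⁻¹' Set.Ioi t, f ω := by
    intro f hfint hf s t hst
    exact setIntegral_mono_set hfint.integrableOn (ae_of_all _ hf)
      (HasSubset.Subset.eventuallyLE (Set.preimage_mono (Set.Ioi_subset_Ioi hst)))
  have hsplit : ∀ f : Ω → ℝ, Integrable f (volume : Measure Ω) → ∀ s : Set Ω,
      ∫ ω in s, f ω = (∫ ω in s, max (f ω) 0) - ∫ ω in s, max (-f ω) 0 := by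
    intro f hfint s
    rw [← integral_sub hfint.pos_part.integrableOn hfint.neg_part.integrableOn]
    exact integral_congr_ae (ae_of_all _ fun ω =>
      (max_zero_sub_max_neg_zero_eq_self (f ω)).symm)
  have hg1meas : Measurable g1 := by
    have : g1 = fun t => (∫ ω in V ⁻¹' Set.Iic t, max (Y1 ω) 0)
        - ∫ ω in V ⁻¹' Set.Iic t, max (-Y1 ω) 0 := by
      funext t; exact hsplit Y1 hY1int _
    rw [this]
    exact ((mono_aux _ hY1int.pos_part fun ω => le_max_right _ _).measurable).sub
      ((mono_aux _ hY1int.neg_part fun ω => le_max_right _ _).measurable)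
  have hg0meas : Measurable g0 := by
    have : g0 = fun t => (∫ ω in V ⁻¹' Set.Ioi t, max (Y0 ω) 0)
        - ∫ ω in V ⁻¹' Set.Ioi t, max (-Y0 ω) 0 := by
      funext t; exact hsplit Y0 hY0int _
    rw [this]
    exact ((anti_aux _ hY0int.pos_part fun ω => le_max_right _ _).measurable).sub
      ((anti_aux _ hY0int.neg_part fun ω => le_max_right _ _).measurable)
  -- bounds on g1, g0
  have hg1bd : ∀ t, ‖g1 t‖ ≤ ∫ ω, ‖Y1 ω‖ := by
    intro t
    refine (norm_integral_le_integral_norm _).trans ?_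
    exact setIntegral_le_integral hY1int.norm (ae_of_all _ fun ω => norm_nonneg _)
  have hg0bd : ∀ t, ‖g0 t‖ ≤ ∫ ω, ‖Y0 ω‖ := by
    intro t
    refine (norm_integral_le_integral_norm _).trans ?_
    exact setIntegral_le_integral hY0int.norm (ae_of_all _ fun ω => norm_nonneg _)
  -- rewrite the target function in terms of g1 and g0
  have hrw : (fun ω => (∫ v in Set.Ioc 0 (P (Z ω)), m1 v) + ∫ v in Set.Ioc (P (Z ω)) 1, m0 v)
      = fun ω => g1 (P (Z ω)) + g0 (P (Z ω)) := by
    funext ω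
    obtain ⟨h0, h1⟩ := hPrange (Z ω)
    congr 1
    · have h := hm1 (Set.Iic (P (Z ω))) measurableSet_Iic
      have hset : Set.Iic (P (Z ω)) ∩ Set.Icc (0:ℝ) 1 = Set.Icc 0 (P (Z ω)) := by
        ext v
        simp only [Set.mem_inter_iff, Set.mem_Iic, Set.mem_Icc]
        exact ⟨fun ⟨hv, h0v, _⟩ => ⟨h0v, hv⟩, fun ⟨h0v, hv⟩ => ⟨hv, h0v, hv.trans h1⟩⟩
      rw [hset] at h
      rw [setIntegral_congr_set Ioc_ae_eq_Icc, ← h]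
    · have h := hm0 (Set.Ioi (P (Z ω))) measurableSet_Ioi
      have hset : Set.Ioi (P (Z ω)) ∩ Set.Icc (0:ℝ) 1 = Set.Ioc (P (Z ω)) 1 := by
        ext v
        simp only [Set.mem_inter_iff, Set.mem_Ioi, Set.mem_Icc, Set.mem_Ioc]
        exact ⟨fun ⟨hv, _, hv1⟩ => ⟨hv, hv1⟩, fun ⟨hv, hv1⟩ => ⟨hv, h0.trans hv.le, hv1⟩⟩
      rw [hset] at h
      exact h.symm
  -- the product structure from independence
  set W : Ω → ℝ × ℝ × ℝ := fun ω => (Y1 ω, Y0 ω, V ω) with hWdef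
  have hWmeas : Measurable W := hY1meas.prodMk (hY0meas.prodMk hVmeas)
  have hmap : (volume : Measure Ω).map (fun ω => (Z ω, W ω))
      = ((volume : Measure Ω).map Z).prod ((volume : Measure Ω).map W) :=
    (indepFun_iff_map_prod_eq_prod_map_map hZmeas.aemeasurable hWmeas.aemeasurable).mp hindep
  haveI : IsProbabilityMeasure ((volume : Measure Ω).map Z) :=
    Measure.isProbabilityMeasure_map hZmeas.aemeasurable
  -- the main Fubini computation
  have main : ∀ φ : ℝ × ℝ × ℝ → ℝ, Measurable φ →
      Integrable (fun ω => φ (W ω)) (volume : Measure Ω) →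
      ∀ χ : ℝ → ℝ → ℝ, Measurable (Function.uncurry χ) → (∀ t v, ‖χ t v‖ ≤ 1) →
      ∀ B : Set 𝒵, MeasurableSet B →
      ∫ ω in Z ⁻¹' B, φ (W ω) * χ (P (Z ω)) (V ω) =
        ∫ z in B, (∫ ω, φ (W ω) * χ (P z) (V ω)) ∂((volume : Measure Ω).map Z) := by
    intro φ hφ hφint χ hχ hχbd B hB
    set G : 𝒵 × (ℝ × ℝ × ℝ) → ℝ :=
      fun p => Set.indicator B (fun _ => (1:ℝ)) p.1 * (φ p.2 * χ (P p.1) p.2.2.2) with hGdef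
    have hGmeas : Measurable G := by
      refine ((measurable_one.indicator hB).comp measurable_fst).mul
        ((hφ.comp measurable_snd).mul ?_)
      exact hχ.comp ((hPmeas.comp measurable_fst).prodMk measurable_snd.snd.snd)
    have hpair : AEMeasurable (fun ω => (Z ω, W ω)) (volume : Measure Ω) :=
      (hZmeas.prodMk hWmeas).aemeasurable
    have hindbd : ∀ z : 𝒵, ‖Set.indicator B (fun _ => (1:ℝ)) z‖ ≤ 1 := by
      intro z; by_cases hz : z ∈ B <;> simp [hz]
    have hstep1 : ∫ ω in Z ⁻¹' B, φ (W ω) * χ (P (Z ω)) (V ω) =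
        ∫ ω, G (Z ω, W ω) := by
      rw [← integral_indicator (hZmeas hB)]
      refine integral_congr_ae (ae_of_all _ fun ω => ?_)
      by_cases hz : Z ω ∈ B
      · simp [hGdef, hz, Set.indicator_of_mem, Set.indicator_of_mem (Set.mem_preimage.mpr hz)]
        exact Or.inl rfl
      · simp [hGdef, hz, Set.indicator_of_notMem,
          Set.indicator_of_notMem (fun h => hz (Set.mem_preimage.mp h))]
    have hGint : Integrable G
        ((((volume : Measure Ω).map Z)).prod ((volume : Measure Ω).map W)) := by
      rw [← hmap, integrable_map_measure hGmeas.aestronglyMeasurable hpair]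
      refine hφint.norm.mono' ?_ (ae_of_all _ fun ω => ?_)
      · exact (hGmeas.comp (hZmeas.prodMk hWmeas)).aestronglyMeasurable
      · simp only [Function.comp, hGdef, norm_mul]
        calc ‖Set.indicator B (fun _ => (1:ℝ)) (Z ω)‖ * (‖φ (W ω)‖ * ‖χ (P (Z ω)) (V ω)‖)
            ≤ 1 * (‖φ (W ω)‖ * 1) := by
              refine mul_le_mul (hindbd _) ?_ (by positivity) zero_le_one
              exact mul_le_mul_of_nonneg_left (hχbd _ _) (norm_nonneg _)
          _ = ‖φ (W ω)‖ := by ring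
    have hstep2 : ∫ ω, G (Z ω, W ω) =
        ∫ z, ∫ w, G (z, w) ∂((volume : Measure Ω).map W) ∂((volume : Measure Ω).map Z) := by
      rw [← integral_map hpair hGmeas.aestronglyMeasurable, hmap, integral_prod _ hGint]
    rw [hstep1, hstep2, ← integral_indicator hB]
    refine integral_congr_ae (ae_of_all _ fun z => ?_)
    by_cases hz : z ∈ B
    · rw [Set.indicator_of_mem hz]
      have : ∀ w : ℝ × ℝ × ℝ, G (z, w) = φ w * χ (P z) w.2.2 := by
        intro w; simp [hGdef, Set.indicator_of_mem hz]
      simp_rw [this]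
      refine integral_map hWmeas.aemeasurable ?_
      exact (hφ.mul (hχ.comp (measurable_const.prodMk measurable_snd.snd))).aestronglyMeasurable
    · rw [Set.indicator_of_notMem hz]
      have : ∀ w : ℝ × ℝ × ℝ, G (z, w) = 0 := by
        intro w; simp [hGdef, Set.indicator_of_notMem hz]
      simp_rw [this, integral_zero]
  -- representations of g1 and g0 as whole-space integrals against indicators
  have hg1rep : ∀ t : ℝ, (∫ ω, Y1 ω * (if V ω ≤ t then 1 else 0)) = g1 t := by
    intro t
    have hgt : g1 t = ∫ ω in V ⁻¹' Set.Iic t, Y1 ω := rfl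
    rw [hgt, ← integral_indicator (hVmeas measurableSet_Iic)]
    refine integral_congr_ae (ae_of_all _ fun ω => ?_)
    by_cases h : V ω ≤ t <;>
      simp [Set.indicator, Set.mem_preimage, Set.mem_Iic, h]
  have hg0rep : ∀ t : ℝ, (∫ ω, Y0 ω * (if t < V ω then 1 else 0)) = g0 t := by
    intro t
    have hgt : g0 t = ∫ ω in V ⁻¹' Set.Ioi t, Y0 ω := rfl
    rw [hgt, ← integral_indicator (hVmeas measurableSet_Ioi)]
    refine integral_congr_ae (ae_of_all _ fun ω => ?_)
    by_cases h : t < V ω <;>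
      simp [Set.indicator, Set.mem_preimage, Set.mem_Ioi, h]
  -- indicator swap
  have hswap : ∀ c v : ℝ, (if v ≤ c then (0:ℝ) else 1) = if c < v then 1 else 0 := by
    intro c v
    by_cases h : v ≤ c
    · simp [h, not_lt.mpr h]
    · simp [h, not_le.mp h]
  -- integrability of the two pieces of Y
  have hY1ite_int : Integrable
      (fun ω => Y1 ω * (if V ω ≤ P (Z ω) then 1 else 0)) (volume : Measure Ω) := by
    refine hY1int.norm.mono' ?_ (ae_of_all _ fun ω => ?_)
    · exact (hY1meas.mul (Measurable.ite (measurableSet_le hVmeas hPZ)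
        measurable_const measurable_const)).aestronglyMeasurable
    · by_cases h : V ω ≤ P (Z ω) <;> simp [h, abs_nonneg]
  have hY0ite_int : Integrable
      (fun ω => Y0 ω * (if P (Z ω) < V ω then 1 else 0)) (volume : Measure Ω) := by
    refine hY0int.norm.mono' ?_ (ae_of_all _ fun ω => ?_)
    · exact (hY0meas.mul (Measurable.ite (measurableSet_lt hPZ hVmeas)
        measurable_const measurable_const)).aestronglyMeasurable
    · by_cases h : P (Z ω) < V ω <;> simp [h, abs_nonneg]
  -- integrability of Y
  have hYeq : Y = fun ω => Y1 ω * (if V ω ≤ P (Z ω) then 1 else 0)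
      + Y0 ω * (if P (Z ω) < V ω then 1 else 0) := by
    funext ω; rw [hYdef ω, hswap]
  have hYint : Integrable Y (volume : Measure Ω) := by
    rw [hYeq]; exact hY1ite_int.add hY0ite_int
  -- the two key set-integral identities
  have key1 : ∀ B : Set 𝒵, MeasurableSet B →
      ∫ ω in Z ⁻¹' B, Y1 ω * (if V ω ≤ P (Z ω) then 1 else 0) =
        ∫ z in B, g1 (P z) ∂((volume : Measure Ω).map Z) := by
    intro B hB
    have hχ : Measurable (Function.uncurry fun t v : ℝ => if v ≤ t then (1:ℝ) else 0) := by
      have : (Function.uncurry fun t v : ℝ => if v ≤ t then (1:ℝ) else 0)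
          = fun p : ℝ × ℝ => if p.2 ≤ p.1 then (1:ℝ) else 0 := rfl
      rw [this]
      exact Measurable.ite (measurableSet_le measurable_snd measurable_fst)
        measurable_const measurable_const
    have hχbd : ∀ t v : ℝ, ‖(if v ≤ t then (1:ℝ) else 0)‖ ≤ 1 := by
      intro t v; by_cases h : v ≤ t <;> simp [h]
    have h := main (fun w => w.1) measurable_fst hY1int
      (fun t v => if v ≤ t then 1 else 0) hχ hχbd B hB
    simp only [hWdef] at h
    simp_rw [hg1rep] at h
    exact h
  have key0 : ∀ B : Set 𝒵, MeasurableSet B →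
      ∫ ω in Z ⁻¹' B, Y0 ω * (if P (Z ω) < V ω then 1 else 0) =
        ∫ z in B, g0 (P z) ∂((volume : Measure Ω).map Z) := by
    intro B hB
    have hχ : Measurable (Function.uncurry fun t v : ℝ => if t < v then (1:ℝ) else 0) := by
      have : (Function.uncurry fun t v : ℝ => if t < v then (1:ℝ) else 0)
          = fun p : ℝ × ℝ => if p.1 < p.2 then (1:ℝ) else 0 := rfl
      rw [this]
      exact Measurable.ite (measurableSet_lt measurable_fst measurable_snd)
        measurable_const measurable_const
    have hχbd : ∀ t v : ℝ, ‖(if t < v then (1:ℝ) else 0)‖ ≤ 1 := by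
      intro t v; by_cases h : t < v <;> simp [h]
    have h := main (fun w => w.2.1) (measurable_fst.comp measurable_snd) hY0int
      (fun t v => if t < v then 1 else 0) hχ hχbd B hB
    simp only [hWdef] at h
    simp_rw [hg0rep] at h
    exact h
  -- integrability over the image measure
  have hg1P_int : Integrable (fun z => g1 (P z)) ((volume : Measure Ω).map Z) := by
    refine (integrable_const (∫ ω, ‖Y1 ω‖)).mono'
      ((hg1meas.comp hPmeas).aestronglyMeasurable) (ae_of_all _ fun z => hg1bd (P z))
  have hg0P_int : Integrable (fun z => g0 (P z)) ((volume : Measure Ω).map Z) := by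
    refine (integrable_const (∫ ω, ‖Y0 ω‖)).mono'
      ((hg0meas.comp hPmeas).aestronglyMeasurable) (ae_of_all _ fun z => hg0bd (P z))
  -- integrability of the candidate conditional expectation
  have hFZmeas : Measurable fun ω => g1 (P (Z ω)) + g0 (P (Z ω)) :=
    (hg1meas.comp hPZ).add (hg0meas.comp hPZ)
  have hFZint : Integrable (fun ω => g1 (P (Z ω)) + g0 (P (Z ω))) (volume : Measure Ω) := by
    refine (integrable_const ((∫ ω, ‖Y1 ω‖) + ∫ ω, ‖Y0 ω‖)).mono'
      hFZmeas.aestronglyMeasurable (ae_of_all _ fun ω => ?_)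
    exact (norm_add_le _ _).trans (add_le_add (hg1bd _) (hg0bd _))
  -- the set integral equality
  have heq : ∀ s : Set Ω, MeasurableSet[MeasurableSpace.comap Z inferInstance] s →
      ∫ ω in s, (g1 (P (Z ω)) + g0 (P (Z ω))) = ∫ ω in s, Y ω := by
    rintro s ⟨B, hB, rfl⟩
    have hL : ∫ ω in Z ⁻¹' B, (g1 (P (Z ω)) + g0 (P (Z ω))) =
        (∫ z in B, g1 (P z) ∂((volume : Measure Ω).map Z)) +
          ∫ z in B, g0 (P z) ∂((volume : Measure Ω).map Z) := by
      rw [← integral_add hg1P_int.integrableOn hg0P_int.integrableOn]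
      exact (setIntegral_map (f := fun z => g1 (P z) + g0 (P z)) hB
        (((hg1meas.comp hPmeas).add (hg0meas.comp hPmeas)).aestronglyMeasurable)
        hZmeas.aemeasurable).symm
    have hR : ∫ ω in Z ⁻¹' B, Y ω =
        (∫ z in B, g1 (P z) ∂((volume : Measure Ω).map Z)) +
          ∫ z in B, g0 (P z) ∂((volume : Measure Ω).map Z) := by
      rw [hYeq, integral_add hY1ite_int.integrableOn hY0ite_int.integrableOn,
        key1 B hB, key0 B hB]
    rw [hL, hR]
  -- conclude via uniqueness of the conditional expectation
  rw [hrw]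
  refine (ae_eq_condExp_of_forall_setIntegral_eq hZmeas.comap_le hYint
    (fun s _ _ => hFZint.integrableOn) (fun s hs _ => heq s hs) ?_).symm
  exact ⟨fun ω => g1 (P (Z ω)) + g0 (P (Z ω)),
    (((hg1meas.comp hPmeas).add (hg0meas.comp hPmeas)).comp
      (measurable_iff_comap_le.mpr le_rfl)).stronglyMeasurable,
    Filter.EventuallyEq.rfl⟩
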